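/- Let (X, ↪, P) be a primal-proximity space and A, B ⊆ X. If B ̸↪ A, then B^↪ ̸↪ A^↪, where A^↪ := {x ∈ X : {x} ↪ A}. -/
import Mathlib


open Set

/-- A collection `P` of subsets of `X` is a *primal* on `X`. -/
def IsPrimalOn {X : Type*} (P : Set (Set X)) : Prop :=
  (Set.univ : Set X) ∉ P ∧
  (∀ A B : Set X, A ∈ P → B ⊆ A → B ∈ P) ∧
  (∀ A B : Set X, A ∩ B ∈ P → A ∈ P ∨ B ∈ P)

/-- A binary relation `r` on the power set of `X` is a *primal-proximity* with
respect to a primal `P` on `X`. -/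
def IsPrimalProximity {X : Type*} (P : Set (Set X)) (r : Set X → Set X → Prop) : Prop :=
  (∀ A B : Set X, r A B → r B A) ∧
  (∀ A B C : Set X, r A (B ∪ C) ↔ (r A B ∨ r A C)) ∧
  (∀ A : Set X, Aᶜ ∉ P → ∀ B : Set X, ¬ r A B) ∧
  (∀ A B : Set X, (A ∩ B)ᶜ ∈ P → r A B) ∧
  (∀ A B : Set X, ¬ r A B →
    ∃ C D : Set X, ¬ r A Cᶜ ∧ ¬ r Dᶜ B ∧ (C ∩ D)ᶜ ∉ P)

/-- The point-primal proximity of `A`: `A^↪ = {x | {x} ↪ A}`. -/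
def ppp {X : Type*} (r : Set X → Set X → Prop) (A : Set X) : Set X :=
  {x : X | r {x} A}

lemma pp_mono {X : Type*} {P : Set (Set X)} {r : Set X → Set X → Prop}
    (hr : IsPrimalProximity P r) {A B B' : Set X} (hBB : B ⊆ B') (hAB : r A B) :
    r A B' := by
  have := (hr.2.1 A B B').mpr (Or.inl hAB)
  rwa [Set.union_eq_self_of_subset_left hBB] at this

lemma pp_key {X : Type*} {P : Set (Set X)} {r : Set X → Set X → Prop}
    (hr : IsPrimalProximity P r) {E F : Set X} (h : ¬ r E F) : ¬ r E (ppp r F) := by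
  obtain ⟨C, D, hC, hD, hCD⟩ := hr.2.2.2.2 E F h
  -- ppp r F ⊆ D
  have hsub : ppp r F ⊆ D := by
    intro x hx
    by_contra hxD
    exact hD (hr.1 F Dᶜ (pp_mono hr (Set.singleton_subset_iff.mpr hxD) (hr.1 _ _ hx)))
  -- ¬ r E (C ∩ D)
  have h2 : ¬ r E (C ∩ D) := fun hcon => hr.2.2.1 (C ∩ D) hCD E (hr.1 _ _ hcon)
  have h3 : ¬ r E (Cᶜ ∪ (C ∩ D)) := fun hcon =>
    ((hr.2.1 E Cᶜ (C ∩ D)).mp hcon).elim hC h2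
  intro hcon
  apply h3
  apply pp_mono hr _ hcon
  intro x hx
  by_cases hxC : x ∈ C
  · exact Or.inr ⟨hxC, hsub hx⟩
  · exact Or.inl hxC

theorem stmt_6 {X : Type*} [Nonempty X] (P : Set (Set X)) (r : Set X → Set X → Prop)
    (hP : IsPrimalOn P) (hr : IsPrimalProximity P r)
    (A B : Set X) (h : ¬ r B A) :
    ¬ r (ppp r B) (ppp r A) := by
  have h1 : ¬ r B (ppp r A) := pp_key hr h
  have h2 : ¬ r (ppp r A) B := fun hc => h1 (hr.1 _ _ hc)
  have h3 : ¬ r (ppp r A) (ppp r B) := pp_key hr h2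
  exact fun hc => h3 (hr.1 _ _ hc)
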